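/- arXiv:1404.0753 — 6 statements merged into one kernel-verified Lean document; each statement's English description precedes it below -/
import Mathlib

section
/- If a graph G of maximum degree at most 3 on vertex set V has a bisection (a partition of V into two parts whose sizes differ by at most one) with at most k edges crossing, then G has a separation (L,S,R) — i.e., a partition of V with no edge between L and R — such that |S| ≤ k and |L|, |R| ≤ ⌈(|V|-|S|)/2⌉. -/
open Finset

lemma aux_sep {V : Type*} [Fintype V] [DecidableEq V] (G : SimpleGraph V) [DecidableRel G.Adj] :
    ∀ k (A B S : Finset V), A ∪ B ∪ S = Finset.univ → Disjoint A B → Disjoint A S →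
    Disjoint B S →
    (A.card : ℤ) - B.card ≤ 1 → (B.card : ℤ) - A.card ≤ 1 →
    (G.edgeFinset.filter (fun e => ∃ a ∈ A, ∃ b ∈ B, e = s(a, b))).card ≤ k →
    ∃ L S' R : Finset V,
      L ∪ S' ∪ R = Finset.univ ∧ Disjoint L S' ∧ Disjoint L R ∧ Disjoint S' R ∧
      (∀ u ∈ L, ∀ v ∈ R, ¬ G.Adj u v) ∧
      S'.card ≤ S.card + k ∧
      L.card ≤ (Fintype.card V - S'.card + 1) / 2 ∧
      R.card ≤ (Fintype.card V - S'.card + 1) / 2 := by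
  intro k
  induction k with
  | zero =>
    intro A B S hU hAB hAS hBS hb1 hb2 hc
    refine ⟨A, S, B, ?_, hAS, hAB, hBS.symm, ?_, by omega, ?_, ?_⟩
    · rw [union_right_comm]; exact hU
    · intro u hu v hv hadj
      have : s(u, v) ∈ G.edgeFinset.filter (fun e => ∃ a ∈ A, ∃ b ∈ B, e = s(a, b)) := by
        simp only [mem_filter, SimpleGraph.mem_edgeFinset, SimpleGraph.mem_edgeSet]
        exact ⟨hadj, u, hu, v, hv, rfl⟩
      have := card_pos.mpr ⟨_, this⟩
      omega
    all_goals
    · have hcard : Fintype.card V = A.card + B.card + S.card := by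
        rw [← Finset.card_univ, ← hU, card_union_of_disjoint, card_union_of_disjoint hAB]
        exact disjoint_union_left.mpr ⟨hAS, hBS⟩
      omega
  | succ k ih =>
    intro A B S hU hAB hAS hBS hb1 hb2 hc
    by_cases hne : (G.edgeFinset.filter (fun e => ∃ a ∈ A, ∃ b ∈ B, e = s(a, b))).Nonempty
    · obtain ⟨e, he⟩ := hne
      simp only [mem_filter, SimpleGraph.mem_edgeFinset, SimpleGraph.mem_edgeSet] at he
      obtain ⟨hadj, a, ha, b, hb, rfl⟩ := he
      have hadj' : G.Adj a b := hadj
      have hab : a ≠ b := fun h => (hadj'.ne) h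
      have hainB : a ∉ B := fun h => (disjoint_left.mp hAB ha) h
      have hbinA : b ∉ A := fun h => (disjoint_left.mp hAB h) hb
      by_cases hcase : B.card ≤ A.card
      · -- move a into S
        have hsub : G.edgeFinset.filter (fun e => ∃ x ∈ A.erase a, ∃ y ∈ B, e = s(x, y)) ⊆
            (G.edgeFinset.filter (fun e => ∃ x ∈ A, ∃ y ∈ B, e = s(x, y))).erase s(a, b) := by
          intro e' he'
          simp only [mem_filter] at he'
          obtain ⟨hE, x, hx, y, hy, rfl⟩ := he'
          have hxa : x ≠ a := ne_of_mem_erase hx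
          refine mem_erase.mpr ⟨?_, mem_filter.mpr ⟨hE, x, mem_of_mem_erase hx, y, hy, rfl⟩⟩
          intro hEq
          rcases Sym2.eq_iff.mp hEq with ⟨h1, h2⟩ | ⟨h1, h2⟩
          · exact hxa h1
          · exact hbinA (h1 ▸ (mem_of_mem_erase hx))
        have hmem : s(a, b) ∈ G.edgeFinset.filter (fun e => ∃ x ∈ A, ∃ y ∈ B, e = s(x, y)) := by
          simp only [mem_filter, SimpleGraph.mem_edgeFinset, SimpleGraph.mem_edgeSet]
          exact ⟨hadj, a, ha, b, hb, rfl⟩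
        have hc' : (G.edgeFinset.filter (fun e => ∃ x ∈ A.erase a, ∃ y ∈ B, e = s(x, y))).card ≤ k := by
          have := card_le_card hsub
          rw [card_erase_of_mem hmem] at this
          have hpos := card_pos.mpr ⟨_, hmem⟩
          omega
        have hcardA : (A.erase a).card = A.card - 1 := card_erase_of_mem ha
        have hApos : 1 ≤ A.card := card_pos.mpr ⟨a, ha⟩
        have g1 : A.erase a ∪ B ∪ insert a S = Finset.univ := by
          rw [← hU]
          ext x
          simp only [mem_union, mem_erase, mem_insert]
          by_cases hxa : x = a <;> simp [hxa, ha]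
        have g2 : Disjoint (A.erase a) B := hAB.mono_left (erase_subset _ _)
        have g3 : Disjoint (A.erase a) (insert a S) := by
          rw [disjoint_insert_right]
          exact ⟨notMem_erase a A, hAS.mono_left (erase_subset _ _)⟩
        have g4 : Disjoint B (insert a S) := by
          rw [disjoint_insert_right]
          exact ⟨hainB, hBS⟩
        have g5 : ((A.erase a).card : ℤ) - B.card ≤ 1 := by push_cast [hcardA]; omega
        have g6 : (B.card : ℤ) - (A.erase a).card ≤ 1 := by push_cast [hcardA]; omega
        obtain ⟨L, S', R, h1, h2, h3, h4, h5, h6, h7, h8⟩ :=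
          ih (A.erase a) B (insert a S) g1 g2 g3 g4 g5 g6 hc'
        exact ⟨L, S', R, h1, h2, h3, h4, h5, by
            have := card_insert_le a S; omega, h7, h8⟩
      · -- move b into S
        have hsub : G.edgeFinset.filter (fun e => ∃ x ∈ A, ∃ y ∈ B.erase b, e = s(x, y)) ⊆
            (G.edgeFinset.filter (fun e => ∃ x ∈ A, ∃ y ∈ B, e = s(x, y))).erase s(a, b) := by
          intro e' he'
          simp only [mem_filter] at he'
          obtain ⟨hE, x, hx, y, hy, rfl⟩ := he'
          have hyb : y ≠ b := ne_of_mem_erase hy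
          refine mem_erase.mpr ⟨?_, mem_filter.mpr ⟨hE, x, hx, y, mem_of_mem_erase hy, rfl⟩⟩
          intro hEq
          rcases Sym2.eq_iff.mp hEq with ⟨h1, h2⟩ | ⟨h1, h2⟩
          · exact hyb h2
          · exact hainB (h2 ▸ (mem_of_mem_erase hy))
        have hmem : s(a, b) ∈ G.edgeFinset.filter (fun e => ∃ x ∈ A, ∃ y ∈ B, e = s(x, y)) := by
          simp only [mem_filter, SimpleGraph.mem_edgeFinset, SimpleGraph.mem_edgeSet]
          exact ⟨hadj, a, ha, b, hb, rfl⟩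
        have hc' : (G.edgeFinset.filter (fun e => ∃ x ∈ A, ∃ y ∈ B.erase b, e = s(x, y))).card ≤ k := by
          have := card_le_card hsub
          rw [card_erase_of_mem hmem] at this
          have hpos := card_pos.mpr ⟨_, hmem⟩
          omega
        have hcardB : (B.erase b).card = B.card - 1 := card_erase_of_mem hb
        have hBpos : 1 ≤ B.card := card_pos.mpr ⟨b, hb⟩
        have g1 : A ∪ B.erase b ∪ insert b S = Finset.univ := by
          rw [← hU]
          ext x
          simp only [mem_union, mem_erase, mem_insert]
          by_cases hxb : x = b <;> simp [hxb, hb]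
        have g2 : Disjoint A (B.erase b) := hAB.mono_right (erase_subset _ _)
        have g3 : Disjoint A (insert b S) := by
          rw [disjoint_insert_right]
          exact ⟨hbinA, hAS⟩
        have g4 : Disjoint (B.erase b) (insert b S) := by
          rw [disjoint_insert_right]
          exact ⟨notMem_erase b B, hBS.mono_left (erase_subset _ _)⟩
        have g5 : (A.card : ℤ) - (B.erase b).card ≤ 1 := by push_cast [hcardB]; omega
        have g6 : ((B.erase b).card : ℤ) - A.card ≤ 1 := by push_cast [hcardB]; omega
        obtain ⟨L, S', R, h1, h2, h3, h4, h5, h6, h7, h8⟩ :=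
          ih A (B.erase b) (insert b S) g1 g2 g3 g4 g5 g6 hc'
        exact ⟨L, S', R, h1, h2, h3, h4, h5, by
            have := card_insert_le b S; omega, h7, h8⟩
    · rw [not_nonempty_iff_eq_empty] at hne
      refine ⟨A, S, B, ?_, hAS, hAB, hBS.symm, ?_, by omega, ?_, ?_⟩
      · rw [union_right_comm]; exact hU
      · intro u hu v hv hadj
        have : s(u, v) ∈ G.edgeFinset.filter (fun e => ∃ a ∈ A, ∃ b ∈ B, e = s(a, b)) := by
          simp only [mem_filter, SimpleGraph.mem_edgeFinset, SimpleGraph.mem_edgeSet]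
          exact ⟨hadj, u, hu, v, hv, rfl⟩
        rw [hne] at this
        exact absurd this (notMem_empty _)
      all_goals
      · have hcard : Fintype.card V = A.card + B.card + S.card := by
          rw [← Finset.card_univ, ← hU, card_union_of_disjoint, card_union_of_disjoint hAB]
          exact disjoint_union_left.mpr ⟨hAS, hBS⟩
        omega

theorem stmt_0 {V : Type*} [Fintype V] [DecidableEq V] (G : SimpleGraph V) [DecidableRel G.Adj]
    (hdeg : ∀ v, G.degree v ≤ 3)
    (A B : Finset V) (hpart : A ∪ B = Finset.univ) (hdisj : Disjoint A B)
    (hbal : (A.card : ℤ) - B.card ≤ 1 ∧ (B.card : ℤ) - A.card ≤ 1)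
    (k : ℕ)
    (hcross : (G.edgeFinset.filter (fun e => ∃ a ∈ A, ∃ b ∈ B, e = s(a, b))).card ≤ k) :
    ∃ L S R : Finset V,
      L ∪ S ∪ R = Finset.univ ∧ Disjoint L S ∧ Disjoint L R ∧ Disjoint S R ∧
      (∀ u ∈ L, ∀ v ∈ R, ¬ G.Adj u v) ∧
      S.card ≤ k ∧
      L.card ≤ (Fintype.card V - S.card + 1) / 2 ∧
      R.card ≤ (Fintype.card V - S.card + 1) / 2 := by
  obtain ⟨L, S', R, h1, h2, h3, h4, h5, h6, h7, h8⟩ :=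
    aux_sep G k A B ∅ (by rw [union_empty, hpart]) hdisj (disjoint_empty_right _)
      (disjoint_empty_right _) hbal.1 hbal.2 hcross
  exact ⟨L, S', R, h1, h2, h3, h4, h5, by simpa using h6, h7, h8⟩
end

section
/- Let t : ℕ → ℝ≥0 be a nondecreasing function satisfying t(n) ≤ 2 · r^{n/6} · t(n/6) for all n ≥ n₀ and t(n) ≤ C for n < n₀, where r ≥ 2. Then t(n) ≤ C' · r^{(1/5)n + o(n)}; in particular the exponent constant c = 1/5 satisfies c = 1/6 + (1/6)c. -/
open Filter Asymptotics

theorem stmt_3 (t : ℕ → ℝ) (r : ℝ) (n₀ : ℕ) (C : ℝ) (hr : 2 ≤ r)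
    (ht0 : ∀ n, 0 ≤ t n) (hmono : Monotone t)
    (hrec : ∀ n, n₀ ≤ n → t n ≤ 2 * r ^ ((n : ℝ) / 6) * t (n / 6))
    (hbase : ∀ n, n < n₀ → t n ≤ C) :
    ((1 : ℝ) / 5 = 1 / 6 + (1 / 6) * (1 / 5)) ∧
    ∃ (C' : ℝ) (g : ℕ → ℝ),
      (g =o[atTop] fun n => (n : ℝ)) ∧
      ∀ n, t n ≤ C' * r ^ ((1 / 5) * (n : ℝ) + g n) := by
  have hr1 : (1 : ℝ) ≤ r := le_trans one_le_two hr
  have hr0 : (0 : ℝ) < r := lt_of_lt_of_le one_pos hr1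
  set N : ℕ := max n₀ 6 with hN
  set C' : ℝ := t N with hC'
  set g : ℕ → ℝ := fun n => Real.logb 6 n with hg
  refine ⟨by norm_num, C', g, ?_, ?_⟩
  · -- g is o(n)
    have h1 : (fun x : ℝ => Real.log x) =o[atTop] (fun x : ℝ => x) :=
      Real.isLittleO_log_id_atTop
    have h2 : (fun n : ℕ => Real.log (n : ℝ)) =o[atTop] (fun n : ℕ => (n : ℝ)) :=
      h1.comp_tendsto tendsto_natCast_atTop_atTop
    have h3 := h2.const_mul_left (Real.log 6)⁻¹
    simpa [hg, Real.logb, div_eq_inv_mul] using h3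
  · -- the main bound
    have hg0 : ∀ n : ℕ, 0 ≤ g n := by
      intro n
      simp only [hg]
      rcases Nat.eq_zero_or_pos n with h | h
      · simp [h]
      · apply Real.logb_nonneg (by norm_num)
        exact_mod_cast h
    intro n
    induction n using Nat.strong_induction_on with
    | _ n ih =>
      have hexp0 : (0 : ℝ) ≤ (1 / 5) * (n : ℝ) + g n := by
        have := hg0 n
        positivity
    -- r ^ exponent ≥ 1
      have hrexp : (1 : ℝ) ≤ r ^ ((1 / 5) * (n : ℝ) + g n) :=
        Real.one_le_rpow hr1 hexp0
      by_cases hn : n ≤ N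
      · -- base case
        have : t n ≤ C' := hmono hn
        calc t n ≤ C' := this
          _ = C' * 1 := (mul_one _).symm
          _ ≤ C' * r ^ ((1 / 5) * (n : ℝ) + g n) := by
              apply mul_le_mul_of_nonneg_left hrexp (ht0 N)
      · push_neg at hn
        have hn6 : 6 < n := lt_of_le_of_lt (le_max_right _ _) hn
        have hm1 : 1 ≤ n / 6 := Nat.one_le_div_iff (by norm_num) |>.mpr (le_of_lt hn6)
        have hmn : n / 6 < n := Nat.div_lt_self (by omega) (by norm_num)
        have hIH := ih (n / 6) hmn
        have hrec' := hrec n (le_trans (le_max_left _ _) (le_of_lt hn))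
        have hC'0 : 0 ≤ C' := ht0 N
        -- combine
        have step1 : t n ≤ 2 * r ^ ((n : ℝ) / 6) * (C' * r ^ ((1 / 5) * ((n / 6 : ℕ) : ℝ) + g (n / 6))) := by
          refine le_trans hrec' ?_
          apply mul_le_mul_of_nonneg_left hIH
          positivity
        have key : (1 : ℝ) + (n : ℝ) / 6 + ((1 / 5) * ((n / 6 : ℕ) : ℝ) + g (n / 6)) ≤
            (1 / 5) * (n : ℝ) + g n := by
          have hfl : ((n / 6 : ℕ) : ℝ) ≤ (n : ℝ) / 6 := by
            rw [le_div_iff₀ (by norm_num : (0:ℝ) < 6)]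
            exact_mod_cast Nat.div_mul_le_self n 6
          have hlog : g (n / 6) + 1 ≤ g n := by
            simp only [hg]
            have hm0 : (0 : ℝ) < ((n / 6 : ℕ) : ℝ) := by exact_mod_cast hm1
            have h6 : (1 : ℝ) = Real.logb 6 6 := by
              rw [Real.logb_self_eq_one] <;> norm_num
            rw [h6, ← Real.logb_mul (ne_of_gt hm0) (by norm_num)]
            apply Real.logb_le_logb_of_le (by norm_num : (1:ℝ) < 6) (by positivity)
            have : (n / 6 : ℕ) * 6 ≤ n := Nat.div_mul_le_self n 6
            exact_mod_cast this
          linarith [hfl, hlog]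
        calc t n ≤ 2 * r ^ ((n : ℝ) / 6) * (C' * r ^ ((1 / 5) * ((n / 6 : ℕ) : ℝ) + g (n / 6))) := step1
          _ = C' * (2 * (r ^ ((n : ℝ) / 6) * r ^ ((1 / 5) * ((n / 6 : ℕ) : ℝ) + g (n / 6)))) := by ring
          _ ≤ C' * (r ^ (1:ℝ) * (r ^ ((n : ℝ) / 6) * r ^ ((1 / 5) * ((n / 6 : ℕ) : ℝ) + g (n / 6)))) := by
              apply mul_le_mul_of_nonneg_left _ hC'0
              apply mul_le_mul_of_nonneg_right _ (by positivity)
              simpa using hr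
          _ = C' * r ^ ((1:ℝ) + (n : ℝ) / 6 + ((1 / 5) * ((n / 6 : ℕ) : ℝ) + g (n / 6))) := by
              rw [← Real.rpow_add hr0, ← Real.rpow_add hr0]; ring_nf
          _ ≤ C' * r ^ ((1 / 5) * (n : ℝ) + g n) := by
              apply mul_le_mul_of_nonneg_left _ hC'0
              exact Real.rpow_le_rpow_of_exponent_le hr1 key
end

section
/- Let B > 0 and f(ρ, λ) = ρ + max(0, B − (ρ − λ)/2) with ρ ≥ λ ≥ 0. Suppose ρ − λ > 2B (imbalanced case), the reduction satisfies the balance condition ρ − ρ' ≥ λ − λ', and set d = (ρ + λ) − (ρ' + λ'). Then f(ρ, λ) − f(ρ', λ') ≥ d/2, both in the case where the resulting instance is imbalanced (ρ' − λ' > 2B, so f(ρ',λ') = ρ') and in the case where it is balanced (ρ' − λ' ≤ 2B, so f(ρ',λ') = (ρ'+λ')/2 + B). -/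
theorem stmt_8 (B ρ lam ρ' lam' d : ℝ) (hB : 0 < B)
    (h0 : 0 ≤ lam) (h1 : lam ≤ ρ)
    (himbal : 2 * B < ρ - lam)
    (h0' : 0 ≤ lam') (h1' : lam' ≤ ρ')
    (hcond : lam - lam' ≤ ρ - ρ')
    (hd : (ρ + lam) - (ρ' + lam') = d) :
    d / 2 ≤ (ρ + max 0 (B - (ρ - lam) / 2)) - (ρ' + max 0 (B - (ρ' - lam') / 2)) := by
  rw [max_eq_left (by linarith), max_def]
  split_ifs <;> linarith
end

section
/- Let μ_r(R), μ_s(S), μ_r(R'), μ_s(S') be nonnegative reals with μ_r(R) + μ_s(S) ≥ (1+ε)(μ_r(R') + μ_s(S')) for some ε > 0, and let B ≥ 0. Then 2 · 2^{μ_r(R') + μ_s(S') + B + (1+B)·log_{1+ε}(μ_r(R') + μ_s(S'))} ≤ 2^{μ_r(R) + μ_s(S) + (1+B)·log_{1+ε}(μ_r(R) + μ_s(S))}, provided μ_r(R') + μ_s(S') ≥ 1. -/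
theorem stmt_10 (μR μS μR' μS' B ε : ℝ)
    (hR : 0 ≤ μR) (hS : 0 ≤ μS) (hR' : 0 ≤ μR') (hS' : 0 ≤ μS')
    (hB : 0 ≤ B) (hε : 0 < ε)
    (h1 : 1 ≤ μR' + μS')
    (hshrink : (1 + ε) * (μR' + μS') ≤ μR + μS) :
    2 * (2 : ℝ) ^ (μR' + μS' + B + (1 + B) * Real.logb (1 + ε) (μR' + μS'))
      ≤ (2 : ℝ) ^ (μR + μS + (1 + B) * Real.logb (1 + ε) (μR + μS)) := by
  have hb : (1 : ℝ) < 1 + ε := by linarith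
  have hx' : (0 : ℝ) < μR' + μS' := by linarith
  have hx : (0 : ℝ) < μR + μS := by nlinarith
  have hlog : 1 + Real.logb (1 + ε) (μR' + μS') ≤ Real.logb (1 + ε) (μR + μS) := by
    have h2 : Real.logb (1 + ε) ((1 + ε) * (μR' + μS')) ≤ Real.logb (1 + ε) (μR + μS) :=
      Real.logb_le_logb_of_le hb (by positivity) hshrink
    rwa [Real.logb_mul (by positivity) (by positivity), Real.logb_self_eq_one hb] at h2
  have hlog' : 0 ≤ Real.logb (1 + ε) (μR' + μS') :=
    Real.logb_nonneg hb h1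
  have key : 1 + (μR' + μS' + B + (1 + B) * Real.logb (1 + ε) (μR' + μS'))
      ≤ μR + μS + (1 + B) * Real.logb (1 + ε) (μR + μS) := by
    have hxx : μR' + μS' ≤ μR + μS := by nlinarith
    nlinarith [mul_le_mul_of_nonneg_left hlog (by linarith : (0:ℝ) ≤ 1 + B)]
  calc 2 * (2 : ℝ) ^ (μR' + μS' + B + (1 + B) * Real.logb (1 + ε) (μR' + μS'))
      = (2 : ℝ) ^ (1 + (μR' + μS' + B + (1 + B) * Real.logb (1 + ε) (μR' + μS'))) := by
        rw [Real.rpow_add (by norm_num : (0:ℝ)<2) 1, Real.rpow_one]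
    _ ≤ _ := Real.rpow_le_rpow_of_exponent_le (by norm_num) key
end

section
/- Let G_3(n) (n divisible by 4, n ≥ 4) be the graph on vertices a₁,…,a_n obtained from the cycle on the 3n/4 vertices {a_j : 4 ∤ j} (in their cyclic order a₁,a₂,a₃,a₅,a₆,a₇,…,a_{n−3},a_{n−2},a_{n−1}) by adding, for each 1 ≤ i ≤ n/4, the vertex a_{4i} adjacent to a_{4i−3}, a_{4i−2}, a_{4i−1}. Then G_3(n) is connected, 3-regular, and for n > 4, deleting a_n and then repeatedly suppressing degree-2 vertices (contracting one of their incident edges) and deleting degree-≤1 vertices yields a graph isomorphic to G_3(n−4). -/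
/-- The graph `G₃(4k)` on vertices `Fin k × Fin 4`: block `i` consists of the three
cycle vertices `(i,0), (i,1), (i,2)` (consecutive on the cycle, with `(i,2)` joined to
`(i+1,0)` of the next block) together with the hub vertex `(i,3)` adjacent to the other
three vertices of its block. Block `i` corresponds to `a_{4i+1}, a_{4i+2}, a_{4i+3}, a_{4i+4}`,
so the hub of the last block is `a_n`. -/
def G3 (k : ℕ) : SimpleGraph (Fin k × Fin 4) :=
  SimpleGraph.fromRel (fun x y =>
    (x.1 = y.1 ∧ ((x.2.val = 0 ∧ y.2.val = 1) ∨ (x.2.val = 1 ∧ y.2.val = 2) ∨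
      (x.2.val = 0 ∧ y.2.val = 3) ∨ (x.2.val = 1 ∧ y.2.val = 3) ∨
      (x.2.val = 2 ∧ y.2.val = 3)))
    ∨ ((y.1.val = (x.1.val + 1) % k) ∧ x.2.val = 2 ∧ y.2.val = 0))

/-- Delete the vertex `v` from `G` (keeping `v` around as an isolated vertex). -/
def isolate {V : Type*} (G : SimpleGraph V) (v : V) : SimpleGraph V :=
  SimpleGraph.fromRel (fun a b => G.Adj a b ∧ a ≠ v ∧ b ≠ v)

/-- Suppress the vertex `v` (making it isolated) and add the edge `u w`. -/
def isolateAdd {V : Type*} (G : SimpleGraph V) (v u w : V) : SimpleGraph V :=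
  SimpleGraph.fromRel (fun a b => (G.Adj a b ∧ a ≠ v ∧ b ≠ v) ∨ (a = u ∧ b = w))

/-- One reduction step: suppress a degree-2 vertex (delete it, joining its two
neighbors by an edge), or delete a vertex of degree at most 1. -/
inductive ReduceStep {V : Type*} : SimpleGraph V → SimpleGraph V → Prop
  | suppress (G : SimpleGraph V) (v u w : V) (h : G.neighborSet v = {u, w}) (huw : u ≠ w) :
      ReduceStep G (isolateAdd G v u w)
  | deleteLow (G : SimpleGraph V) (v : V) (h : (G.neighborSet v).Subsingleton) :
      ReduceStep G (isolate G v)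


def E (s t : ℕ) : Prop :=
  (s = 0 ∧ t = 1) ∨ (s = 1 ∧ t = 0) ∨ (s = 1 ∧ t = 2) ∨ (s = 2 ∧ t = 1) ∨
  (s = 0 ∧ t = 3) ∨ (s = 3 ∧ t = 0) ∨ (s = 1 ∧ t = 3) ∨ (s = 3 ∧ t = 1) ∨
  (s = 2 ∧ t = 3) ∨ (s = 3 ∧ t = 2)

lemma adj_val {k : ℕ} (x y : Fin k × Fin 4) :
    (G3 k).Adj x y ↔
      ((x.1.val = y.1.val ∧ E x.2.val y.2.val) ∨
       (y.1.val = (x.1.val + 1) % k ∧ x.2.val = 2 ∧ y.2.val = 0) ∨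
       (x.1.val = (y.1.val + 1) % k ∧ y.2.val = 2 ∧ x.2.val = 0)) := by
  obtain ⟨x1, x2⟩ := x
  obtain ⟨y1, y2⟩ := y
  fin_cases x2 <;> fin_cases y2 <;>
    simp [G3, SimpleGraph.fromRel_adj, E, Prod.ext_iff, Fin.ext_iff, -Fin.val_eq_zero_iff] <;>
    omega

lemma isolate_adj {V : Type*} (G : SimpleGraph V) (v a b : V) :
    (isolate G v).Adj a b ↔ G.Adj a b ∧ a ≠ v ∧ b ≠ v := by
  simp only [isolate, SimpleGraph.fromRel_adj]
  constructor
  · rintro ⟨hne, ⟨h, h1, h2⟩ | ⟨h, h1, h2⟩⟩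
    · exact ⟨h, h1, h2⟩
    · exact ⟨h.symm, h2, h1⟩
  · rintro ⟨h, h1, h2⟩
    exact ⟨h.ne, Or.inl ⟨h, h1, h2⟩⟩

lemma isolateAdd_adj {V : Type*} (G : SimpleGraph V) (v u w a b : V) :
    (isolateAdd G v u w).Adj a b ↔
      ((G.Adj a b ∧ a ≠ v ∧ b ≠ v) ∨ (a ≠ b ∧ ((a = u ∧ b = w) ∨ (a = w ∧ b = u)))) := by
  simp only [isolateAdd, SimpleGraph.fromRel_adj]
  constructor
  · rintro ⟨hne, (⟨h, h1, h2⟩ | ⟨h1, h2⟩) | (⟨h, h1, h2⟩ | ⟨h1, h2⟩)⟩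
    · exact Or.inl ⟨h, h1, h2⟩
    · exact Or.inr ⟨hne, Or.inl ⟨h1, h2⟩⟩
    · exact Or.inl ⟨h.symm, h2, h1⟩
    · exact Or.inr ⟨hne, Or.inr ⟨h2, h1⟩⟩
  · rintro (⟨h, h1, h2⟩ | ⟨hne, ⟨h1, h2⟩ | ⟨h1, h2⟩⟩)
    · exact ⟨h.ne, Or.inl (Or.inl ⟨h, h1, h2⟩)⟩
    · exact ⟨hne, Or.inl (Or.inr ⟨h1, h2⟩)⟩
    · exact ⟨hne, Or.inr (Or.inr ⟨h2, h1⟩)⟩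

lemma succ_mod {j k : ℕ} (hj : j < k) :
    (j + 1 = k ∧ (j + 1) % k = 0) ∨ (j + 1 < k ∧ (j + 1) % k = j + 1) := by
  rcases Nat.lt_or_ge (j + 1) k with h | h
  · exact Or.inr ⟨h, Nat.mod_eq_of_lt h⟩
  · have : j + 1 = k := by omega
    exact Or.inl ⟨this, by rw [this, Nat.mod_self]⟩

lemma pred_mod {i k : ℕ} (hk : 1 ≤ k) (hi : i < k) :
    (i = 0 ∧ (i + (k - 1)) % k = k - 1) ∨ (1 ≤ i ∧ (i + (k - 1)) % k = i - 1) := by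
  rcases Nat.eq_zero_or_pos i with h | h
  · subst h
    exact Or.inl ⟨rfl, by simp [Nat.mod_eq_of_lt (by omega : k - 1 < k)]⟩
  · refine Or.inr ⟨h, ?_⟩
    have : i + (k - 1) = (i - 1) + 1 * k := by omega
    rw [this, Nat.add_mul_mod_self_right, Nat.mod_eq_of_lt (by omega)]

lemma nbhd0 {k : ℕ} (hk : 1 ≤ k) (i : Fin k) :
    (G3 k).neighborSet (i, (0 : Fin 4)) =
      {(i, (1 : Fin 4)), (i, (3 : Fin 4)),
       (⟨(i.val + (k - 1)) % k, Nat.mod_lt _ (by omega)⟩, (2 : Fin 4))} := by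
  ext ⟨⟨j, hj⟩, t⟩
  rw [SimpleGraph.mem_neighborSet, adj_val]
  have m1 := succ_mod (k := k) i.isLt
  have m2 := succ_mod (k := k) hj
  have m3 := pred_mod hk i.isLt
  have hi := i.isLt
  fin_cases t <;>
    simp [E, Prod.ext_iff, Fin.ext_iff] <;> omega

lemma nbhd1 {k : ℕ} (i : Fin k) :
    (G3 k).neighborSet (i, (1 : Fin 4)) =
      {(i, (0 : Fin 4)), (i, (2 : Fin 4)), (i, (3 : Fin 4))} := by
  ext ⟨⟨j, hj⟩, t⟩
  rw [SimpleGraph.mem_neighborSet, adj_val]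
  have m1 := succ_mod (k := k) i.isLt
  have m2 := succ_mod (k := k) hj
  have hi := i.isLt
  fin_cases t <;>
    simp [E, Prod.ext_iff, Fin.ext_iff] <;> omega

lemma nbhd2 {k : ℕ} (hk : 1 ≤ k) (i : Fin k) :
    (G3 k).neighborSet (i, (2 : Fin 4)) =
      {(i, (1 : Fin 4)), (i, (3 : Fin 4)),
       (⟨(i.val + 1) % k, Nat.mod_lt _ (by omega)⟩, (0 : Fin 4))} := by
  ext ⟨⟨j, hj⟩, t⟩
  rw [SimpleGraph.mem_neighborSet, adj_val]
  have m1 := succ_mod (k := k) i.isLt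
  have m2 := succ_mod (k := k) hj
  have hi := i.isLt
  fin_cases t <;>
    simp [E, Prod.ext_iff, Fin.ext_iff] <;> omega

lemma nbhd3 {k : ℕ} (i : Fin k) :
    (G3 k).neighborSet (i, (3 : Fin 4)) =
      {(i, (0 : Fin 4)), (i, (1 : Fin 4)), (i, (2 : Fin 4))} := by
  ext ⟨⟨j, hj⟩, t⟩
  rw [SimpleGraph.mem_neighborSet, adj_val]
  have m1 := succ_mod (k := k) i.isLt
  have m2 := succ_mod (k := k) hj
  have hi := i.isLt
  fin_cases t <;>
    simp [E, Prod.ext_iff, Fin.ext_iff] <;> omega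

lemma deg3 {k : ℕ} (hk : 1 ≤ k) (v : Fin k × Fin 4) :
    ((G3 k).neighborSet v).ncard = 3 := by
  obtain ⟨i, s⟩ := v
  rw [Set.ncard_eq_three]
  fin_cases s
  · exact ⟨_, _, _, by simp only [ne_eq, Prod.mk.injEq, Fin.ext_iff, not_and]; omega, by simp only [ne_eq, Prod.mk.injEq, Fin.ext_iff, not_and]; omega,
      by simp only [ne_eq, Prod.mk.injEq, Fin.ext_iff, not_and]; omega, nbhd0 hk i⟩
  · exact ⟨_, _, _, by simp only [ne_eq, Prod.mk.injEq, Fin.ext_iff, not_and]; omega, by simp only [ne_eq, Prod.mk.injEq, Fin.ext_iff, not_and]; omega,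
      by simp only [ne_eq, Prod.mk.injEq, Fin.ext_iff, not_and]; omega, nbhd1 i⟩
  · exact ⟨_, _, _, by simp only [ne_eq, Prod.mk.injEq, Fin.ext_iff, not_and]; omega, by simp only [ne_eq, Prod.mk.injEq, Fin.ext_iff, not_and]; omega,
      by simp only [ne_eq, Prod.mk.injEq, Fin.ext_iff, not_and]; omega, nbhd2 hk i⟩
  · exact ⟨_, _, _, by simp only [ne_eq, Prod.mk.injEq, Fin.ext_iff, not_and]; omega, by simp only [ne_eq, Prod.mk.injEq, Fin.ext_iff, not_and]; omega,
      by simp only [ne_eq, Prod.mk.injEq, Fin.ext_iff, not_and]; omega, nbhd3 i⟩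

lemma adj_of {k : ℕ} {x y : Fin k × Fin 4}
    (h : x.1.val = y.1.val ∧ E x.2.val y.2.val) : (G3 k).Adj x y :=
  (adj_val x y).mpr (Or.inl h)

lemma reach_zero {k : ℕ} (hk : 1 ≤ k) :
    ∀ i (h : i < k), (G3 k).Reachable (⟨i, h⟩, (0 : Fin 4)) (⟨0, hk⟩, (0 : Fin 4)) := by
  intro i
  induction i with
  | zero => intro h; rfl
  | succ n ih =>
    intro h
    have h1 : (G3 k).Adj (⟨n + 1, h⟩, (0 : Fin 4)) (⟨n, by omega⟩, (2 : Fin 4)) := by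
      rw [adj_val]
      exact Or.inr (Or.inr ⟨by simp [Nat.mod_eq_of_lt h], rfl, rfl⟩)
    have h2 : (G3 k).Adj ((⟨n, by omega⟩ : Fin k), (2 : Fin 4)) (⟨n, by omega⟩, (1 : Fin 4)) :=
      adj_of ⟨rfl, show E 2 1 by unfold E; omega⟩
    have h3 : (G3 k).Adj ((⟨n, by omega⟩ : Fin k), (1 : Fin 4)) (⟨n, by omega⟩, (0 : Fin 4)) :=
      adj_of ⟨rfl, show E 1 0 by unfold E; omega⟩
    exact ((h1.reachable.trans h2.reachable).trans h3.reachable).trans (ih (by omega))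

lemma g3_connected {k : ℕ} (hk : 1 ≤ k) : (G3 k).Connected := by
  rw [SimpleGraph.connected_iff]
  refine ⟨?_, ⟨((⟨0, hk⟩ : Fin k), 0)⟩⟩
  have key : ∀ v : Fin k × Fin 4, (G3 k).Reachable v (⟨0, hk⟩, (0 : Fin 4)) := by
    rintro ⟨i, s⟩
    have base : (G3 k).Reachable (i, (0 : Fin 4)) (⟨0, hk⟩, (0 : Fin 4)) := by
      have := reach_zero hk i.val i.isLt
      simpa using this
    fin_cases s
    · exact base
    · exact ((adj_of (x := (i, (1:Fin 4))) (y := (i, (0:Fin 4))) ⟨rfl, show E 1 0 by unfold E; omega⟩).reachable).trans base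
    · refine ((adj_of (x := (i, (2:Fin 4))) (y := (i, (1:Fin 4))) ⟨rfl, show E 2 1 by unfold E; omega⟩).reachable).trans ?_
      exact ((adj_of (x := (i, (1:Fin 4))) (y := (i, (0:Fin 4))) ⟨rfl, show E 1 0 by unfold E; omega⟩).reachable).trans base
    · exact ((adj_of (x := (i, (3:Fin 4))) (y := (i, (0:Fin 4))) ⟨rfl, show E 3 0 by unfold E; omega⟩).reachable).trans base
  intro u v
  exact (key u).trans (key v).symm

def Gr0 (k : ℕ) (hk : 2 ≤ k) : SimpleGraph (Fin k × Fin 4) :=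
  isolate (G3 k) (⟨k - 1, by omega⟩, (3 : Fin 4))

def Gr1 (k : ℕ) (hk : 2 ≤ k) : SimpleGraph (Fin k × Fin 4) :=
  isolateAdd (Gr0 k hk) (⟨k - 1, by omega⟩, (1 : Fin 4))
    (⟨k - 1, by omega⟩, (0 : Fin 4)) (⟨k - 1, by omega⟩, (2 : Fin 4))

def Gr2 (k : ℕ) (hk : 2 ≤ k) : SimpleGraph (Fin k × Fin 4) :=
  isolateAdd (Gr1 k hk) (⟨k - 1, by omega⟩, (0 : Fin 4))
    (⟨k - 2, by omega⟩, (2 : Fin 4)) (⟨k - 1, by omega⟩, (2 : Fin 4))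

def GrH (k : ℕ) (hk : 2 ≤ k) : SimpleGraph (Fin k × Fin 4) :=
  isolateAdd (Gr2 k hk) (⟨k - 1, by omega⟩, (2 : Fin 4))
    (⟨k - 2, by omega⟩, (2 : Fin 4)) (⟨0, by omega⟩, (0 : Fin 4))

lemma step1nb {k : ℕ} (hk : 2 ≤ k) :
    (Gr0 k hk).neighborSet (⟨k - 1, by omega⟩, (1 : Fin 4)) =
      {((⟨k - 1, by omega⟩ : Fin k), (0 : Fin 4)), ((⟨k - 1, by omega⟩ : Fin k), (2 : Fin 4))} := by
  ext ⟨⟨j, hj⟩, t⟩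
  rw [SimpleGraph.mem_neighborSet, Gr0, isolate_adj, adj_val]
  have m1 : (k - 1 + 1) % k = 0 := by
    have : k - 1 + 1 = k := by omega
    rw [this, Nat.mod_self]
  have m2 := succ_mod (k := k) hj
  fin_cases t <;> simp [E, Prod.ext_iff, Fin.ext_iff] <;> omega

lemma step2nb {k : ℕ} (hk : 2 ≤ k) :
    (Gr1 k hk).neighborSet (⟨k - 1, by omega⟩, (0 : Fin 4)) =
      {((⟨k - 2, by omega⟩ : Fin k), (2 : Fin 4)), ((⟨k - 1, by omega⟩ : Fin k), (2 : Fin 4))} := by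
  ext ⟨⟨j, hj⟩, t⟩
  rw [SimpleGraph.mem_neighborSet, Gr1, isolateAdd_adj, Gr0, isolate_adj, adj_val]
  have m1 : (k - 1 + 1) % k = 0 := by
    have : k - 1 + 1 = k := by omega
    rw [this, Nat.mod_self]
  have m2 := succ_mod (k := k) hj
  fin_cases t <;> simp [E, Prod.ext_iff, Fin.ext_iff] <;> omega

lemma step3nb {k : ℕ} (hk : 2 ≤ k) :
    (Gr2 k hk).neighborSet (⟨k - 1, by omega⟩, (2 : Fin 4)) =
      {((⟨k - 2, by omega⟩ : Fin k), (2 : Fin 4)), ((⟨0, by omega⟩ : Fin k), (0 : Fin 4))} := by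
  ext ⟨⟨j, hj⟩, t⟩
  rw [SimpleGraph.mem_neighborSet, Gr2, isolateAdd_adj, Gr1, isolateAdd_adj, Gr0, isolate_adj,
    adj_val]
  have m1 : (k - 1 + 1) % k = 0 := by
    have : k - 1 + 1 = k := by omega
    rw [this, Nat.mod_self]
  have m2 := succ_mod (k := k) hj
  fin_cases t <;> simp [E, Prod.ext_iff, Fin.ext_iff] <;> omega

lemma grH_adj {k : ℕ} (hk : 2 ≤ k) (a b : Fin k × Fin 4) :
    (GrH k hk).Adj a b ↔
      (((G3 k).Adj a b ∧ a.1.val < k - 1 ∧ b.1.val < k - 1) ∨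
       ((a = ((⟨k - 2, by omega⟩ : Fin k), (2 : Fin 4)) ∧
           b = ((⟨0, by omega⟩ : Fin k), (0 : Fin 4))) ∨
        (a = ((⟨0, by omega⟩ : Fin k), (0 : Fin 4)) ∧
           b = ((⟨k - 2, by omega⟩ : Fin k), (2 : Fin 4))))) := by
  obtain ⟨⟨i, hi⟩, s⟩ := a
  obtain ⟨⟨j, hj⟩, t⟩ := b
  rw [GrH, isolateAdd_adj, Gr2, isolateAdd_adj, Gr1, isolateAdd_adj, Gr0, isolate_adj]
  simp only [adj_val]
  fin_cases s <;> fin_cases t <;> simp [E, Prod.ext_iff, Fin.ext_iff] <;> omega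

lemma grH_support {k : ℕ} (hk : 2 ≤ k) (x : Fin k × Fin 4) :
    x ∈ (GrH k hk).support ↔ x.1.val < k - 1 := by
  obtain ⟨⟨i, hi⟩, s⟩ := x
  simp only [SimpleGraph.mem_support]
  constructor
  · rintro ⟨y, hy⟩
    rw [grH_adj] at hy
    rcases hy with ⟨_, h, _⟩ | ⟨h, _⟩ | ⟨h, _⟩ <;>
      simp only [Prod.ext_iff, Fin.ext_iff] at * <;> omega
  · intro h
    by_cases hs : s.val = 3
    · refine ⟨(⟨i, hi⟩, (0 : Fin 4)), ?_⟩
      rw [grH_adj]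
      refine Or.inl ⟨(adj_val _ _).mpr (Or.inl ⟨rfl, ?_⟩), h, h⟩
      exact show E s.val ((0 : Fin 4)).val by unfold E; omega
    · refine ⟨(⟨i, hi⟩, (3 : Fin 4)), ?_⟩
      rw [grH_adj]
      refine Or.inl ⟨(adj_val _ _).mpr (Or.inl ⟨rfl, ?_⟩), h, h⟩
      have hs4 := s.isLt
      exact show E s.val ((3 : Fin 4)).val by unfold E; omega

theorem stmt_12 (k : ℕ) (hk : 1 ≤ k) :
    (G3 k).Connected ∧
    (∀ v, ((G3 k).neighborSet v).ncard = 3) ∧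
    (2 ≤ k →
      ∃ H : SimpleGraph (Fin k × Fin 4),
        Relation.ReflTransGen ReduceStep
          (isolate (G3 k) (⟨k - 1, by omega⟩, (3 : Fin 4))) H ∧
        Nonempty ((SimpleGraph.induce H.support H) ≃g G3 (k - 1))) := by
  refine ⟨g3_connected hk, fun v => deg3 hk v, fun hk2 => ?_⟩
  refine ⟨GrH k hk2, ?_, ?_⟩
  · have s1 : ReduceStep (Gr0 k hk2) (Gr1 k hk2) :=
      ReduceStep.suppress _ _ _ _ (step1nb hk2)
        (by simp [Prod.ext_iff, Fin.ext_iff])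
    have s2 : ReduceStep (Gr1 k hk2) (Gr2 k hk2) :=
      ReduceStep.suppress _ _ _ _ (step2nb hk2)
        (by simp only [ne_eq, Prod.mk.injEq, Fin.mk.injEq, not_and]; omega)
    have s3 : ReduceStep (Gr2 k hk2) (GrH k hk2) :=
      ReduceStep.suppress _ _ _ _ (step3nb hk2)
        (by simp [Prod.ext_iff, Fin.ext_iff])
    exact ((Relation.ReflTransGen.single s1).tail s2).tail s3
  · refine ⟨⟨⟨fun x => (⟨x.val.1.val, (grH_support hk2 x.val).mp x.property⟩, x.val.2),
      fun y => ⟨((⟨y.1.val, lt_of_lt_of_le y.1.isLt (Nat.sub_le k 1)⟩ : Fin k), y.2),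
        (grH_support hk2 _).mpr y.1.isLt⟩, ?_, ?_⟩, ?_⟩⟩
    · rintro ⟨⟨⟨i, hi⟩, s⟩, hx⟩; rfl
    · rintro ⟨⟨j, hj⟩, t⟩; rfl
    · intro a b
      obtain ⟨⟨⟨i, hi⟩, s⟩, ha⟩ := a
      obtain ⟨⟨⟨j, hj⟩, t⟩, hb⟩ := b
      have hi2 : i < k - 1 := (grH_support hk2 _).mp ha
      have hj2 : j < k - 1 := (grH_support hk2 _).mp hb
      show (G3 (k - 1)).Adj _ _ ↔ (GrH k hk2).Adj (⟨i, hi⟩, s) (⟨j, hj⟩, t)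
      rw [grH_adj hk2]
      simp only [adj_val]
      have f1 := succ_mod (k := k) hi
      have f2 := succ_mod (k := k) hj
      have f3 := succ_mod (k := k - 1) hi2
      have f4 := succ_mod (k := k - 1) hj2
      fin_cases s <;> fin_cases t <;> simp [E, Prod.ext_iff, Fin.ext_iff] <;> omega
end

section
/- If a function f : ℕ → ℝ≥0 satisfies f(I) ≤ p(η) · r^{μ'} whenever the algorithm delegates to a subroutine, and otherwise f(I) ≤ q(η(I)) + Σᵢ f(Iᵢ) with η(Iᵢ) ≤ η(I) − 1 and Σᵢ r^{μ(Iᵢ)} ≤ r^{μ(I)}, where μ'(I) ≤ μ(I) for all I, p(η) = O(η^{c+1}), q(η) = O(η^c), then f(I) = O(η(I)^{c+1}) · r^{μ(I)}. -/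
theorem stmt_19 {α : Type*} (T μ μ' : α → ℝ) (η : α → ℕ) (children : α → List α)
    (delegated : α → Prop) (c r K : ℝ) (hc : 0 ≤ c) (hr : 1 < r) (hK : 0 ≤ K)
    (hT : ∀ I, 0 ≤ T I) (hμ : ∀ I, 0 ≤ μ I) (hμ' : ∀ I, μ' I ≤ μ I)
    (hdeleg : ∀ I, delegated I → T I ≤ K * ((η I : ℝ) + 1) ^ (c + 1) * r ^ μ' I)
    (hrec : ∀ I, ¬ delegated I → T I ≤ K * ((η I : ℝ) + 1) ^ c + ((children I).map T).sum)
    (hη : ∀ I, ¬ delegated I → ∀ J ∈ children I, η J + 1 ≤ η I)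
    (hsum : ∀ I, ¬ delegated I → ((children I).map (fun J => r ^ μ J)).sum ≤ r ^ μ I) :
    ∃ K' : ℝ, ∀ I, T I ≤ K' * ((η I : ℝ) + 1) ^ (c + 1) * r ^ μ I := by
  have hr0 : (0:ℝ) < r := lt_trans one_pos hr
  have hrpow1 : ∀ x : ℝ, 0 ≤ x → (1:ℝ) ≤ r ^ x := by
    intro x hx
    calc (1:ℝ) = r ^ (0:ℝ) := (Real.rpow_zero r).symm
    _ ≤ r ^ x := Real.rpow_le_rpow_of_exponent_le hr.le hx
  suffices H : ∀ n, ∀ I, η I = n → T I ≤ K * ((η I : ℝ) + 1) ^ (c + 1) * r ^ μ I by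
    exact ⟨K, fun I => H (η I) I rfl⟩
  intro n
  induction n using Nat.strong_induction_on with
  | _ n ih =>
    intro I hIn
    by_cases hd : delegated I
    · calc T I ≤ K * ((η I : ℝ) + 1) ^ (c + 1) * r ^ μ' I := hdeleg I hd
      _ ≤ K * ((η I : ℝ) + 1) ^ (c + 1) * r ^ μ I := by
          apply mul_le_mul_of_nonneg_left
          · exact Real.rpow_le_rpow_of_exponent_le hr.le (hμ' I)
          · positivity
    · set a : ℝ := (η I : ℝ) with ha
      have ha0 : 0 ≤ a := Nat.cast_nonneg _
      have hrμ : (1:ℝ) ≤ r ^ μ I := hrpow1 _ (hμ I)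
      have hchild : ∀ J ∈ children I, T J ≤ K * a ^ (c + 1) * r ^ μ J := by
        intro J hJ
        have h1 : η J + 1 ≤ η I := hη I hd J hJ
        have h2 : η J < n := by omega
        have h3 : T J ≤ K * ((η J : ℝ) + 1) ^ (c + 1) * r ^ μ J := ih (η J) h2 J rfl
        refine h3.trans ?_
        apply mul_le_mul_of_nonneg_right _ (Real.rpow_nonneg hr0.le _)
        apply mul_le_mul_of_nonneg_left _ hK
        apply Real.rpow_le_rpow (by positivity) _ (by linarith)
        have : ((η J : ℝ) + 1) ≤ (η I : ℝ) := by exact_mod_cast h1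
        simpa [ha] using this
      have hsum1 : ((children I).map T).sum ≤ K * a ^ (c + 1) * r ^ μ I := by
        calc ((children I).map T).sum
            ≤ ((children I).map (fun J => K * a ^ (c + 1) * r ^ μ J)).sum := by
              apply List.sum_le_sum
              intro J hJ
              exact hchild J hJ
          _ = K * a ^ (c + 1) * ((children I).map (fun J => r ^ μ J)).sum := by
              rw [← List.sum_map_mul_left]
          _ ≤ K * a ^ (c + 1) * r ^ μ I := by
              apply mul_le_mul_of_nonneg_left (hsum I hd) (by positivity)
      have key : K * (a + 1) ^ c + K * a ^ (c + 1) * r ^ μ I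
          ≤ K * (a + 1) ^ (c + 1) * r ^ μ I := by
        have e1 : (a + 1) ^ (c + 1) = (a + 1) ^ c * (a + 1) := by
          rw [Real.rpow_add (by positivity), Real.rpow_one]
        have e2 : a ^ (c + 1) = a ^ c * a := by
          rw [Real.rpow_add' ha0 (by positivity), Real.rpow_one]
        have h4 : a ^ c ≤ (a + 1) ^ c :=
          Real.rpow_le_rpow ha0 (by linarith) hc
        have h5 : (1:ℝ) ≤ (a + 1) ^ c := by
          calc (1:ℝ) = (1:ℝ) ^ c := (Real.one_rpow c).symm
          _ ≤ (a + 1) ^ c := Real.rpow_le_rpow zero_le_one (by linarith) hc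
        have h6 : a ^ (c+1) * r ^ μ I ≤ (a + 1) ^ c * a * r ^ μ I := by
          rw [e2]
          apply mul_le_mul_of_nonneg_right _ (Real.rpow_nonneg hr0.le _)
          exact mul_le_mul_of_nonneg_right h4 ha0
        have h7 : (a + 1) ^ c ≤ (a + 1) ^ c * r ^ μ I := by
          nlinarith [Real.rpow_nonneg (le_of_lt (lt_trans zero_lt_one (lt_of_lt_of_le one_lt_two (by linarith : (2:ℝ) ≤ 2)))) c]
        rw [e1]
        nlinarith [Real.rpow_nonneg hr0.le (μ I), mul_le_mul_of_nonneg_left hrμ (le_trans zero_le_one h5)]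
      calc T I ≤ K * (a + 1) ^ c + ((children I).map T).sum := hrec I hd
        _ ≤ K * (a + 1) ^ c + K * a ^ (c + 1) * r ^ μ I := by linarith
        _ ≤ K * (a + 1) ^ (c + 1) * r ^ μ I := key
end
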